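/- Suppose s is a binary string that is (ε,k,m)*-normal with m − k ≥ 2 and ε < 1/6. Then each of the strings s+1 and s+2 (interpreting s as a binary representation of an integer and keeping the same length) can be decomposed as the concatenation of an (ε,k,m)-normal string and a string of length at most m+2. -/

import Mathlib

/-- `occCount u w`: the number of occurrences of `u` as a contiguous subword of `w`. -/
def occCount {α : Type*} [DecidableEq α] (u w : List α) : ℕ :=
  ((Finset.range (w.length + 1)).filter (fun i => (w.drop i).take u.length = u)).card

/-- A binary string `s` is `(ε,k)`-normal: every word `u` of length `k` occurs in `s`
with frequency within `ε` of `2^{−k}`. -/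
def EpsKNormal (ε : ℝ) (k : ℕ) (s : List (Fin 2)) : Prop :=
  ∀ u : List (Fin 2), u.length = k →
    |((occCount u s : ℝ)) / ((s.length : ℝ) - (k : ℝ) + 1) - ((2 : ℝ) ^ k)⁻¹| ≤ ε

/-- `(ε,k,m)`-normal: every nonempty prefix whose length is a multiple of `m` is
`(ε,k)`-normal. -/
def EpsKMNormal (ε : ℝ) (k m : ℕ) (s : List (Fin 2)) : Prop :=
  ∀ j : ℕ, 0 < j → j * m ≤ s.length → EpsKNormal ε k (s.take (j * m))

/-- `(ε,k,m)*`-normal: both `s` and its reversal are `(ε,k,m)`-normal. -/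
def EpsKMStarNormal (ε : ℝ) (k m : ℕ) (s : List (Fin 2)) : Prop :=
  EpsKMNormal ε k m s ∧ EpsKMNormal ε k m s.reverse

/-- The `ℓ`-bit big-endian binary representation of `n` (mod `2^ℓ`). -/
def toBits (ℓ n : ℕ) : List (Fin 2) :=
  (List.range ℓ).map (fun i => if Nat.testBit n (ℓ - 1 - i) then 1 else 0)

lemma toBits_length (ℓ n : ℕ) : (toBits ℓ n).length = ℓ := by simp [toBits]

lemma toBits_getElem (ℓ n i : ℕ) (h : i < ℓ) :
    (toBits ℓ n)[i]'(by rw [toBits_length]; exact h) =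
      if n.testBit (ℓ - 1 - i) then 1 else 0 := by
  simp [toBits]

lemma epskn_zero {ε : ℝ} (hε : 0 ≤ ε) (w : List (Fin 2)) : EpsKNormal ε 0 w := by
  intro u hu
  rw [List.length_eq_zero_iff] at hu; subst hu
  have h1 : occCount ([] : List (Fin 2)) w = w.length + 1 := by
    rw [occCount]
    rw [Finset.filter_true_of_mem (fun i _ => by simp)]
    simp
  rw [h1]
  have h0 : (w.length : ℝ) + 1 ≠ 0 := by positivity
  have h2 : (w.length : ℝ) - (0:ℕ) + 1 = (w.length : ℝ) + 1 := by push_cast; ring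
  rw [h2]
  push_cast
  rw [div_self h0, pow_zero, inv_one]
  simpa using hε

lemma epskm_zero {ε : ℝ} (hε : 0 ≤ ε) (m : ℕ) (w : List (Fin 2)) : EpsKMNormal ε 0 m w :=
  fun _ _ _ => epskn_zero hε _

lemma epskm_small {ε : ℝ} {k m : ℕ} {w : List (Fin 2)} (h : w.length < m) :
    EpsKMNormal ε k m w := by
  intro j hj hjm
  exfalso
  have : m ≤ j * m := Nat.le_mul_of_pos_left m hj
  omega

lemma epskm_take {ε : ℝ} {k m : ℕ} {s : List (Fin 2)} (h : EpsKMNormal ε k m s) (a : ℕ) :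
    EpsKMNormal ε k m (s.take a) := by
  intro j hj hjm
  rw [List.length_take] at hjm
  have h1 : (s.take a).take (j * m) = s.take (j * m) := by
    rw [List.take_take]
    congr 1
    omega
  rw [h1]
  exact h j hj (by omega)

lemma testBit_eq_of_div_eq {a b D : ℕ} (h : a / 2^D = b / 2^D) :
    ∀ i, D ≤ i → a.testBit i = b.testBit i := by
  intro i hi
  have hi' : i = D + (i - D) := by omega
  rw [hi', ← Nat.testBit_shiftRight, ← Nat.testBit_shiftRight,
      Nat.shiftRight_eq_div_pow, Nat.shiftRight_eq_div_pow, h]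

lemma succ_div_pow (d n : ℕ) (h : n.testBit d = false) :
    (n + 1) / 2^(d+1) = n / 2^(d+1) := by
  have hr : n % 2^(d+1) < 2^d := by
    have h2 : n % (2^d * 2) / 2^d = n / 2^d % 2 := Nat.mod_mul_right_div_self n (2^d) 2
    rw [Nat.testBit_eq_decide_div_mod_eq] at h
    have h3 : n / 2^d % 2 = 0 := by
      rcases Nat.mod_two_eq_zero_or_one (n / 2^d) with h' | h'
      · exact h'
      · simp [h'] at h
    have h5 : n % 2^(d+1) = n % (2^d * 2) := by rw [pow_succ]
    rw [h5]
    have h6 : n % (2^d * 2) / 2^d = 0 := by rw [h2, h3]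
    exact ((Nat.div_eq_zero_iff).mp h6).resolve_left (by positivity)
  have h2 : n % 2^(d+1) + 1 < 2^(d+1) := by
    have : (2:ℕ)^(d+1) = 2^d * 2 := pow_succ 2 d
    omega
  conv_lhs => rw [← Nat.div_add_mod n (2^(d+1))]
  rw [add_assoc, Nat.mul_add_div (by positivity), Nat.div_eq_of_lt h2, add_zero]

lemma toBits_take_eq {ℓ D a b : ℕ} (h : ∀ i, D ≤ i → a.testBit i = b.testBit i) :
    (toBits ℓ a).take (ℓ - D) = (toBits ℓ b).take (ℓ - D) := by
  apply List.ext_getElem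
  · simp [toBits_length]
  · intro i h1 h2
    simp only [List.length_take, toBits_length] at h1
    have hi : i < ℓ := by omega
    rw [List.getElem_take, List.getElem_take, toBits_getElem ℓ a i hi, toBits_getElem ℓ b i hi,
        h (ℓ - 1 - i) (by omega)]

lemma decomp {ε : ℝ} {k m ℓ n : ℕ} (hs1 : EpsKMNormal ε k m (toBits ℓ n)) (n' D : ℕ)
    (hD : D ≤ m + 2) (h : ∀ i, D ≤ i → (n').testBit i = n.testBit i) :
    ∃ t r : List (Fin 2), toBits ℓ n' = t ++ r ∧ EpsKMNormal ε k m t ∧ r.length ≤ m + 2 := by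
  refine ⟨(toBits ℓ n').take (ℓ - D), (toBits ℓ n').drop (ℓ - D),
    (List.take_append_drop _ _).symm, ?_, ?_⟩
  · rw [toBits_take_eq h]
    exact epskm_take hs1 _
  · rw [List.length_drop, toBits_length]
    omega

lemma no_run {ε : ℝ} (hε0 : 0 < ε) (hε : ε < 1/6) {k m ℓ n : ℕ}
    (hk : 1 ≤ k) (hkm : k + 2 ≤ m) (hℓ : m ≤ ℓ)
    (hrev : EpsKMNormal ε k m (toBits ℓ n).reverse)
    (a : ℕ) (ha : a ≤ 1) (hbits : ∀ i, a ≤ i → i < a + (m - 1) → n.testBit i = true) :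
    False := by
  have hlen : (toBits ℓ n).reverse.length = ℓ := by simp [toBits_length]
  have hN := hrev 1 one_pos (by rw [hlen]; omega)
  rw [one_mul] at hN
  set w := (toBits ℓ n).reverse.take m with hw
  have hwlen : w.length = m := by rw [hw, List.length_take, hlen]; omega
  have hwget : ∀ i, (h : i < m) → w[i]'(by omega) = if n.testBit i then 1 else 0 := by
    intro i h
    have hil : i < ℓ := by omega
    simp only [hw]
    rw [List.getElem_take, List.getElem_reverse]
    simp only [toBits_length]
    have h1 : ℓ - 1 - i < ℓ := by omega
    have h2 : ℓ - 1 - (ℓ - 1 - i) = i := by omega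
    rw [toBits_getElem ℓ n _ h1, h2]
  have hu := hN (List.replicate k 1) (by simp)
  have hocc : m - k ≤ occCount (List.replicate k 1) w := by
    rw [occCount]
    have hsub : Finset.Icc a (a + (m - 1 - k)) ⊆
        (Finset.range (w.length + 1)).filter
          (fun i => (w.drop i).take (List.replicate k (1 : Fin 2)).length = List.replicate k 1) := by
      intro i hi
      simp only [Finset.mem_Icc] at hi
      simp only [Finset.mem_filter, Finset.mem_range, List.length_replicate]
      refine ⟨by omega, ?_⟩
      apply List.ext_getElem
      · rw [List.length_take, List.length_drop, hwlen, List.length_replicate]; omega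
      · intro j h1 h2
        simp only [List.length_replicate] at h2
        rw [List.getElem_take, List.getElem_drop, List.getElem_replicate]
        have hij : i + j < m := by omega
        rw [hwget (i + j) hij, hbits (i + j) (by omega) (by omega)]
        simp
    calc m - k = (Finset.Icc a (a + (m - 1 - k))).card := by rw [Nat.card_Icc]; omega
    _ ≤ _ := Finset.card_le_card hsub
  have hu' := hu
  rw [hwlen] at hu'
  have hmk : (k:ℝ) + 2 ≤ (m:ℝ) := by exact_mod_cast hkm
  have hoccR : (m:ℝ) - (k:ℝ) ≤ (occCount (List.replicate k 1) w : ℝ) := by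
    have h1 : ((m - k : ℕ) : ℝ) ≤ (occCount (List.replicate k 1) w : ℝ) := by exact_mod_cast hocc
    have h2 : ((m - k : ℕ) : ℝ) = (m:ℝ) - (k:ℝ) := by
      rw [Nat.cast_sub (by omega)]
    linarith
  have hpow : ((2:ℝ)^k)⁻¹ ≤ 1/2 := by
    have h1 : (2:ℝ) ≤ 2^k := by
      calc (2:ℝ) = 2^1 := (pow_one 2).symm
      _ ≤ 2^k := pow_le_pow_right₀ (by norm_num) hk
    rw [inv_le_comm₀ (by positivity) (by norm_num)]
    linarith
  have hden0 : (0:ℝ) < (m:ℝ) - (k:ℝ) + 1 := by linarith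
  have hfrac : (2:ℝ)/3 ≤ (occCount (List.replicate k 1) w : ℝ) / ((m:ℝ) - (k:ℝ) + 1) := by
    rw [le_div_iff₀ hden0]
    nlinarith
  have habs := (abs_le.mp hu').1
  have habs2 := (abs_le.mp hu').2
  linarith

/-- If `s` (the `ℓ`-bit representation of `n`) is `(ε,k,m)*`-normal with `m − k ≥ 2` and
`ε < 1/6`, then each of `s+1` and `s+2` (same length) decomposes as an `(ε,k,m)`-normal
string followed by a string of length at most `m+2`. -/
theorem add_one_two_preserves_normality (ε : ℝ) (hε0 : 0 < ε) (hε : ε < 1 / 6)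
    (k m ℓ n : ℕ) (hkm : k + 2 ≤ m) (hn : n < 2 ^ ℓ)
    (hs : EpsKMStarNormal ε k m (toBits ℓ n)) :
    (∃ t r : List (Fin 2), toBits ℓ (n + 1) = t ++ r ∧
        EpsKMNormal ε k m t ∧ r.length ≤ m + 2) ∧
    (∃ t r : List (Fin 2), toBits ℓ (n + 2) = t ++ r ∧
        EpsKMNormal ε k m t ∧ r.length ≤ m + 2) := by
  by_cases hk : k = 0
  · subst hk
    exact ⟨⟨toBits ℓ (n+1), [], by simp, epskm_zero hε0.le m _, by simp⟩,
           ⟨toBits ℓ (n+2), [], by simp, epskm_zero hε0.le m _, by simp⟩⟩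
  by_cases hℓ : ℓ < m
  · have h1 : ∀ n', (toBits ℓ n').length < m := fun n' => by rw [toBits_length]; exact hℓ
    exact ⟨⟨toBits ℓ (n+1), [], by simp, epskm_small (h1 _), by simp⟩,
           ⟨toBits ℓ (n+2), [], by simp, epskm_small (h1 _), by simp⟩⟩
  push_neg at hℓ
  have hk1 : 1 ≤ k := by omega
  -- the least zero bit of n
  have hex : ∃ i, n.testBit i = false := ⟨ℓ, Nat.testBit_lt_two_pow hn⟩
  have hd_false : n.testBit (Nat.find hex) = false := Nat.find_spec hex
  have hd_ones : ∀ i, i < Nat.find hex → n.testBit i = true := by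
    intro i hi
    have := Nat.find_min hex hi
    simpa using this
  have hd_lt : Nat.find hex ≤ m - 1 := by
    by_contra hcon
    push_neg at hcon
    exact no_run hε0 hε hk1 hkm hℓ hs.2 0 (by omega)
      (fun i _ hi => hd_ones i (by omega))
  -- the least zero bit of n / 2
  have hex2 : ∃ i, (n / 2).testBit i = false :=
    ⟨ℓ, Nat.testBit_lt_two_pow (lt_of_le_of_lt (Nat.div_le_self n 2) hn)⟩
  have htb : ∀ i, (n / 2).testBit i = n.testBit (i + 1) := by
    intro i
    have h1 : n >>> 1 = n / 2 := by rw [Nat.shiftRight_eq_div_pow, pow_one]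
    rw [← h1, Nat.testBit_shiftRight, Nat.add_comm]
  have hd2_false : (n / 2).testBit (Nat.find hex2) = false := Nat.find_spec hex2
  have hd2_ones : ∀ i, i < Nat.find hex2 → n.testBit (i + 1) = true := by
    intro i hi
    have := Nat.find_min hex2 hi
    rw [htb] at this
    simpa using this
  have hd2_lt : Nat.find hex2 ≤ m - 2 := by
    by_contra hcon
    push_neg at hcon
    refine no_run hε0 hε hk1 hkm hℓ hs.2 1 le_rfl (fun i h1i him => ?_)
    obtain ⟨i', rfl⟩ : ∃ i', i = i' + 1 := ⟨i - 1, by omega⟩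
    exact hd2_ones i' (by omega)
  constructor
  · -- n + 1
    refine decomp hs.1 (n+1) (Nat.find hex + 1) (by omega) ?_
    exact testBit_eq_of_div_eq (succ_div_pow _ n hd_false)
  · -- n + 2
    refine decomp hs.1 (n+2) (Nat.find hex2 + 2) (by omega) ?_
    apply testBit_eq_of_div_eq
    have e1 : (n + 2) / 2 = n / 2 + 1 := by omega
    have e2 : (2:ℕ) ^ (Nat.find hex2 + 2) = 2 * 2 ^ (Nat.find hex2 + 1) := by ring
    rw [e2, ← Nat.div_div_eq_div_mul, ← Nat.div_div_eq_div_mul, e1,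
        succ_div_pow _ _ hd2_false]
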